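/- The population ranking objective satisfies the symmetrization identity: for each fixed i ∈ {0,...,K}, Σ_x Σ_{y_0,...,y_K} p_{X,Y}(x,y_i)·∏_{j≠i} p_N(y_j)·log q(i|x,y_{0:K};θ) is independent of i, and hence L_R^∞(θ) = (1/(K+1))·Σ_x Σ_{y_{0:K}} α(x,y_{0:K})·Σ_{i=0}^K β(i|x,y_{0:K})·log q(i|x,y_{0:K};θ), where α(x,y_{0:K}) = Σ_{i=0}^K p_{X,Y}(x,y_i)∏_{j≠i}p_N(y_j) and β(i|x,y_{0:K}) = p_{X,Y}(x,y_i)∏_{j≠i}p_N(y_j)/α(x,y_{0:K}). -/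

import Mathlib

/-- Symmetrization identity for the population ranking objective: each term
`∑ₓ ∑_{y₀:K} p_{X,Y}(x,yᵢ) ∏_{j≠i} p_N(y_j) log q(i|x,y₀:K;θ)` is independent of `i`,
and hence the population ranking objective equals
`(1/(K+1)) ∑ₓ ∑_{y₀:K} α(x,y₀:K) ∑ᵢ β(i|x,y₀:K) log q(i|x,y₀:K;θ)`. -/
theorem ranking_objective_symmetrization (X Y : Type) [Fintype X] [Fintype Y] (K : ℕ)
    (Θ : Type) (θ : Θ)
    (pXY : X → Y → ℝ) (hpXY : ∀ x y, 0 < pXY x y)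
    (pN : Y → ℝ) (hpN : ∀ y, 0 < pN y)
    (s : X → Y → Θ → ℝ)
    (sb : X → Y → Θ → ℝ) (hsb : ∀ x y θ', sb x y θ' = s x y θ' - Real.log (pN y))
    (q : Fin (K + 1) → X → (Fin (K + 1) → Y) → ℝ)
    (hq : ∀ i x ys, q i x ys
      = Real.exp (sb x (ys i) θ) / ∑ j, Real.exp (sb x (ys j) θ))
    (b : Fin (K + 1) → X → (Fin (K + 1) → Y) → ℝ)
    (hb : ∀ i x ys, b i x ys = pXY x (ys i) * ∏ j ∈ Finset.univ.erase i, pN (ys j))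
    (α : X → (Fin (K + 1) → Y) → ℝ)
    (hα : ∀ x ys, α x ys = ∑ i, b i x ys) :
    (∀ i i' : Fin (K + 1),
      (∑ x, ∑ ys : Fin (K + 1) → Y, b i x ys * Real.log (q i x ys))
        = ∑ x, ∑ ys : Fin (K + 1) → Y, b i' x ys * Real.log (q i' x ys)) ∧
    (∑ x, ∑ ys : Fin (K + 1) → Y, b 0 x ys * Real.log (q 0 x ys))
      = (1 / ((K : ℝ) + 1)) * ∑ x, ∑ ys : Fin (K + 1) → Y,
          α x ys * ∑ i, (b i x ys / α x ys) * Real.log (q i x ys) := by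
  have hbpos : ∀ i x ys, 0 < b i x ys := by
    intro i x ys
    rw [hb]
    exact mul_pos (hpXY _ _) (Finset.prod_pos fun j _ => hpN _)
  have hαpos : ∀ x ys, 0 < α x ys := by
    intro x ys
    rw [hα]
    exact Finset.sum_pos (fun i _ => hbpos i x ys) Finset.univ_nonempty
  have key : ∀ (i i' : Fin (K + 1)) (x : X),
      (∑ ys : Fin (K + 1) → Y, b i x ys * Real.log (q i x ys))
        = ∑ ys : Fin (K + 1) → Y, b i' x ys * Real.log (q i' x ys) := by
    intro i i' x
    set σ := Equiv.swap i i' with hσ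
    set e : (Fin (K + 1) → Y) ≃ (Fin (K + 1) → Y) :=
      Equiv.arrowCongr σ.symm (Equiv.refl Y) with he
    have := Equiv.sum_comp e
      (fun ys : Fin (K + 1) → Y => b i' x ys * Real.log (q i' x ys))
    rw [← this]
    refine Finset.sum_congr rfl fun ys _ => ?_
    have happ : ∀ j, (e ys) j = ys (σ j) := fun j => rfl
    have hprod : ∀ (f : Fin (K + 1) → ℝ),
        (∏ j ∈ Finset.univ.erase i', f (σ j)) = ∏ j ∈ Finset.univ.erase i, f j := by
      intro f
      have hmap : (Finset.univ.erase i').map σ.toEmbedding = Finset.univ.erase i := by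
        rw [Finset.map_erase]
        congr 1
        · simp
        · simp [hσ]
      rw [← hmap, Finset.prod_map]
      rfl
    have hbq : b i' x (e ys) = b i x ys := by
      rw [hb, hb]
      simp only [happ]
      rw [hprod (fun j => pN (ys j))]
      congr 2
      simp [hσ]
    have hsum : (∑ j, Real.exp (sb x ((e ys) j) θ)) = ∑ j, Real.exp (sb x (ys j) θ) := by
      simp only [happ]
      exact Equiv.sum_comp σ (fun j => Real.exp (sb x (ys j) θ))
    have hqq : q i' x (e ys) = q i x ys := by
      rw [hq, hq, hsum]
      congr 2
      rw [happ]
      congr 1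
      simp [hσ]
    rw [hbq, hqq]
  constructor
  · intro i i'
    exact Finset.sum_congr rfl fun x _ => key i i' x
  · have hinner : ∀ x ys, α x ys * ∑ i, (b i x ys / α x ys) * Real.log (q i x ys)
        = ∑ i, b i x ys * Real.log (q i x ys) := by
      intro x ys
      rw [Finset.mul_sum]
      refine Finset.sum_congr rfl fun i _ => ?_
      field_simp
      rw [mul_assoc]
      exact mul_div_cancel_left₀ _ (hαpos x ys).ne'
    have hRHS : (∑ x, ∑ ys : Fin (K + 1) → Y,
          α x ys * ∑ i, (b i x ys / α x ys) * Real.log (q i x ys))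
        = ((K : ℝ) + 1) * ∑ x, ∑ ys : Fin (K + 1) → Y, b 0 x ys * Real.log (q 0 x ys) := by
      calc (∑ x, ∑ ys : Fin (K + 1) → Y,
            α x ys * ∑ i, (b i x ys / α x ys) * Real.log (q i x ys))
          = ∑ x, ∑ ys : Fin (K + 1) → Y, ∑ i, b i x ys * Real.log (q i x ys) := by
            refine Finset.sum_congr rfl fun x _ => Finset.sum_congr rfl fun ys _ => hinner x ys
        _ = ∑ i : Fin (K + 1), ∑ x, ∑ ys : Fin (K + 1) → Y, b i x ys * Real.log (q i x ys) := by
            exact Eq.trans (Finset.sum_congr rfl fun x _ => Finset.sum_comm) Finset.sum_comm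
        _ = ∑ i : Fin (K + 1), ∑ x, ∑ ys : Fin (K + 1) → Y, b 0 x ys * Real.log (q 0 x ys) := by
            refine Finset.sum_congr rfl fun i _ => Finset.sum_congr rfl fun x _ => key i 0 x
        _ = ((K : ℝ) + 1) * ∑ x, ∑ ys : Fin (K + 1) → Y, b 0 x ys * Real.log (q 0 x ys) := by
            rw [Finset.sum_const, Finset.card_univ, Fintype.card_fin]
            push_cast
            ring
    rw [hRHS]
    have : (K : ℝ) + 1 ≠ 0 := by positivity
    field_simp
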